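/- arXiv:1611.01465 — 5 statements merged into one kernel-verified Lean document; each statement's English description precedes it below -/
import Mathlib

section
/- Let R be a commutative ring and let 0 → M₁ → M₂ → M₃ → 0 be a short exact sequence of R-modules such that for every commutative R-algebra S the induced sequence 0 → M₁ ⊗_R S → M₂ ⊗_R S → M₃ ⊗_R S → 0 is exact. If M₃ is a finitely presented R-module, then the sequence 0 → M₁ → M₂ → M₃ → 0 splits, i.e., the surjection M₂ → M₃ admits an R-linear section. -/
open TensorProduct

universe u

lemma aux_lTensor_injective {R : Type u} [CommRing R]
    {M₁ M₂ : Type u} [AddCommGroup M₁] [Module R M₁] [AddCommGroup M₂] [Module R M₂]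
    (i : M₁ →ₗ[R] M₂)
    (hbc : ∀ (S : Type u) [CommRing S] [Algebra R S], Function.Injective (i.baseChange S))
    (N : Type u) [AddCommGroup N] [Module R N] :
    Function.Injective (LinearMap.lTensor N i) := by
  letI : Module Rᵐᵒᵖ N := Module.compHom N ((RingHom.id R).fromOpposite mul_comm)
  haveI : IsCentralScalar R N := ⟨fun r n => rfl⟩
  set S := TrivSqZeroExt R N with hSdef
  have hS : Function.Injective (i.baseChange S) := hbc S
  have hS' : Function.Injective (LinearMap.lTensor S i) := by
    rwa [← LinearMap.baseChange_eq_ltensor]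
  let j : N →ₗ[R] S := TrivSqZeroExt.inrHom R N
  let q : S →ₗ[R] N := TrivSqZeroExt.sndHom R N
  have hqj : q ∘ₗ j = LinearMap.id := by
    ext n
    rfl
  have hj : Function.Injective (LinearMap.rTensor M₂ j) := by
    have hli : Function.LeftInverse (LinearMap.rTensor M₂ q) (LinearMap.rTensor M₂ j) := by
      intro t
      rw [← LinearMap.comp_apply, ← LinearMap.rTensor_comp, hqj, LinearMap.rTensor_id,
        LinearMap.id_apply]
    exact hli.injective
  have hmap : Function.Injective (TensorProduct.map j i) := by
    rw [← LinearMap.lTensor_comp_rTensor]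
    exact hS'.comp (by
      have hli : Function.LeftInverse (LinearMap.rTensor M₁ q) (LinearMap.rTensor M₁ j) := by
        intro t
        rw [← LinearMap.comp_apply, ← LinearMap.rTensor_comp, hqj, LinearMap.rTensor_id,
          LinearMap.id_apply]
      exact hli.injective)
  rw [← LinearMap.rTensor_comp_lTensor] at hmap
  intro a b hab
  exact hmap (show (LinearMap.rTensor M₂ j ∘ₗ LinearMap.lTensor N i) a =
    (LinearMap.rTensor M₂ j ∘ₗ LinearMap.lTensor N i) b by
      rw [LinearMap.comp_apply, LinearMap.comp_apply, hab])

lemma aux_solve {R : Type u} [CommRing R]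
    {M₁ M₂ : Type u} [AddCommGroup M₁] [Module R M₁] [AddCommGroup M₂] [Module R M₂]
    (i : M₁ →ₗ[R] M₂)
    (hinj : ∀ (N : Type u) [AddCommGroup N] [Module R N],
      Function.Injective (LinearMap.lTensor N i))
    (κ ι : Type u) [Fintype κ] [Fintype ι] [DecidableEq κ] [DecidableEq ι]
    (a : κ → ι → R) (x : ι → M₂) (y : κ → M₁)
    (h : ∀ k, i (y k) = ∑ j, a k j • x j) :
    ∃ z : ι → M₁, ∀ k, y k = ∑ j, a k j • z j := by
  classical
  let g : (ι → R) →ₗ[R] (κ → R) :=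
    LinearMap.pi fun k => ∑ j, a k j • LinearMap.proj j
  have hg : ∀ (v : ι → R) (k : κ), g v k = ∑ j, a k j * v j := by
    intro v k
    simp [g, LinearMap.pi_apply, LinearMap.sum_apply, smul_eq_mul]
  set N := (κ → R) ⧸ LinearMap.range g with hN
  let π : (κ → R) →ₗ[R] N := (LinearMap.range g).mkQ
  have hexact : Function.Exact g π := LinearMap.exact_iff.mpr (Submodule.ker_mkQ _)
  have hπ : Function.Surjective π := Submodule.mkQ_surjective _
  have hrex : Function.Exact (LinearMap.rTensor M₁ g) (LinearMap.rTensor M₁ π) :=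
    rTensor_exact M₁ hexact hπ
  have hgπ : ∀ v, π (g v) = 0 := fun v => (hexact _).mpr ⟨v, rfl⟩
  set u : (κ → R) ⊗[R] M₁ := ∑ k, Pi.single k (1:R) ⊗ₜ[R] y k with hu
  have hu0 : LinearMap.lTensor N i (LinearMap.rTensor M₁ π u) = 0 := by
    have h1 : LinearMap.lTensor N i (LinearMap.rTensor M₁ π u)
        = TensorProduct.map π i u := by
      rw [← LinearMap.lTensor_comp_rTensor, LinearMap.comp_apply]
    rw [h1, hu, map_sum]
    simp only [TensorProduct.map_tmul]
    calc ∑ k, π (Pi.single k 1) ⊗ₜ[R] i (y k)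
        = ∑ k, ∑ j, (a k j • π (Pi.single k 1)) ⊗ₜ[R] x j := by
          refine Finset.sum_congr rfl fun k _ => ?_
          rw [h k, TensorProduct.tmul_sum]
          refine Finset.sum_congr rfl fun j _ => ?_
          rw [TensorProduct.tmul_smul, TensorProduct.smul_tmul']
      _ = ∑ j, (π (∑ k, a k j • (Pi.single k (1:R) : κ → R))) ⊗ₜ[R] x j := by
          rw [Finset.sum_comm]
          refine Finset.sum_congr rfl fun j _ => ?_
          rw [map_sum, ← TensorProduct.sum_tmul]
          simp_rw [map_smul]
      _ = ∑ j, (π (g (Pi.single j 1))) ⊗ₜ[R] x j := by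
          refine Finset.sum_congr rfl fun j _ => ?_
          congr 1
          congr 1
          ext k
          simp [hg, Pi.single_apply, Finset.sum_apply, mul_comm]
      _ = 0 := by simp [hgπ]
  have ht : LinearMap.rTensor M₁ π u = 0 := hinj N (by rw [hu0, map_zero])
  obtain ⟨w, hw⟩ := (hrex u).mp ht
  let φ : κ → ((κ → R) ⊗[R] M₁ →ₗ[R] M₁) := fun k =>
    (TensorProduct.lid R M₁).toLinearMap ∘ₗ LinearMap.rTensor M₁ (LinearMap.proj k)
  let ψ : ι → ((ι → R) ⊗[R] M₁ →ₗ[R] M₁) := fun j =>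
    (TensorProduct.lid R M₁).toLinearMap ∘ₗ LinearMap.rTensor M₁ (LinearMap.proj j)
  refine ⟨fun j => ψ j w, fun k => ?_⟩
  have hφu : φ k u = y k := by
    simp [φ, u, map_sum, Pi.single_apply]
  have hcomp : φ k ∘ₗ LinearMap.rTensor M₁ g = ∑ j, a k j • ψ j := by
    apply TensorProduct.ext'
    intro v m
    simp [φ, ψ, hg, Finset.sum_smul, mul_smul]
  calc y k = φ k u := hφu.symm
    _ = φ k (LinearMap.rTensor M₁ g w) := by rw [hw]
    _ = (∑ j, a k j • ψ j) w := by rw [← LinearMap.comp_apply, hcomp]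
    _ = ∑ j, a k j • ψ j w := by simp [LinearMap.sum_apply]

/-- If `0 → M₁ → M₂ → M₃ → 0` is a short exact sequence of `R`-modules that stays exact
after tensoring with every commutative `R`-algebra `S`, and `M₃` is finitely presented,
then the sequence splits: the surjection `M₂ → M₃` has an `R`-linear section. -/
theorem splitting_of_finitePresentation_of_baseChange_exact
    (R : Type u) [CommRing R]
    (M₁ M₂ M₃ : Type u) [AddCommGroup M₁] [Module R M₁] [AddCommGroup M₂] [Module R M₂]
    [AddCommGroup M₃] [Module R M₃]
    (i : M₁ →ₗ[R] M₂) (p : M₂ →ₗ[R] M₃)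
    (hi : Function.Injective i) (hp : Function.Surjective p)
    (hexact : LinearMap.range i = LinearMap.ker p)
    (hbc : ∀ (S : Type u) [CommRing S] [Algebra R S],
      Function.Injective (i.baseChange S) ∧
        LinearMap.range (i.baseChange S) = LinearMap.ker (p.baseChange S) ∧
        Function.Surjective (p.baseChange S))
    (hfp : Module.FinitePresentation R M₃) :
    ∃ s : M₃ →ₗ[R] M₂, p ∘ₗ s = LinearMap.id := by
  classical
  haveI := hfp
  have hinj : ∀ (N : Type u) [AddCommGroup N] [Module R N],
      Function.Injective (LinearMap.lTensor N i) :=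
    aux_lTensor_injective i (fun S _ _ => (hbc S).1)
  -- a finite presentation of M₃ with function types
  obtain ⟨s0, hspan, -⟩ := hfp.out
  let ι : Type u := ↥s0
  let f : (ι → R) →ₗ[R] M₃ := ∑ l : ι, (LinearMap.proj l).smulRight (l : M₃)
  have hfapp : ∀ v, f v = ∑ l : ι, v l • (l : M₃) := by
    intro v; simp [f, LinearMap.sum_apply]
  have hfsingle : ∀ l : ι, f (Pi.single l 1) = (l : M₃) := by
    intro l
    rw [hfapp]
    rw [Finset.sum_eq_single l]
    · simp
    · intro b _ hb; simp [Pi.single_apply, hb]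
    · simp
  have hf : Function.Surjective f := by
    rw [← LinearMap.range_eq_top, eq_top_iff, ← hspan, Submodule.span_le]
    intro m hm
    exact ⟨Pi.single (⟨m, hm⟩ : ι) 1, hfsingle ⟨m, hm⟩⟩
  have hker : (LinearMap.ker f).FG := Module.FinitePresentation.fg_ker f hf
  obtain ⟨T, hT⟩ := hker
  let κ : Type u := ↥T
  -- lifts of generators
  choose x hx using fun l : ι => hp (l : M₃)
  let X : (ι → R) →ₗ[R] M₂ := ∑ l : ι, (LinearMap.proj l).smulRight (x l)
  have hXapp : ∀ v, X v = ∑ l : ι, v l • x l := by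
    intro v; simp [X, LinearMap.sum_apply]
  have hpX : ∀ v, p (X v) = f v := by
    intro v
    rw [hXapp, hfapp, map_sum]
    exact Finset.sum_congr rfl fun l _ => by rw [map_smul, hx]
  -- relations land in range i
  have hkmem : ∀ k : κ, X ↑k ∈ LinearMap.range i := by
    intro k
    rw [hexact, LinearMap.mem_ker, hpX]
    have : (↑k : ι → R) ∈ LinearMap.ker f := by
      rw [← hT]; exact Submodule.subset_span k.2
    exact this
  choose y hy using fun k : κ => hkmem k
  let a : κ → ι → R := fun k l => (↑k : ι → R) l
  have heq : ∀ k : κ, i (y k) = ∑ j : ι, a k j • x j := by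
    intro k; rw [hy k, hXapp]
  obtain ⟨z, hz⟩ := aux_solve i hinj κ ι a x y heq
  let Z : (ι → R) →ₗ[R] M₁ := ∑ l : ι, (LinearMap.proj l).smulRight (z l)
  have hZapp : ∀ v, Z v = ∑ l : ι, v l • z l := by
    intro v; simp [Z, LinearMap.sum_apply]
  let X' : (ι → R) →ₗ[R] M₂ := X - i ∘ₗ Z
  have hle : LinearMap.ker f ≤ LinearMap.ker X' := by
    rw [← hT, Submodule.span_le]
    intro v hv
    have hv' : v ∈ T := hv
    simp only [SetLike.mem_coe, LinearMap.mem_ker, X', LinearMap.sub_apply,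
      LinearMap.comp_apply]
    have h1 : X v = i (y ⟨v, hv'⟩) := (hy ⟨v, hv'⟩).symm
    have h2 : Z v = y ⟨v, hv'⟩ := by
      rw [hZapp, hz ⟨v, hv'⟩]
    rw [h1, h2, sub_self]
  have hpX' : ∀ v, p (X' v) = f v := by
    intro v
    have hpi : p (i (Z v)) = 0 := by
      have : i (Z v) ∈ LinearMap.ker p := hexact ▸ LinearMap.mem_range_self i (Z v)
      exact this
    simp only [X', LinearMap.sub_apply, LinearMap.comp_apply, map_sub, hpi, sub_zero, hpX]
  let e : ((ι → R) ⧸ LinearMap.ker f) ≃ₗ[R] M₃ := f.quotKerEquivOfSurjective hf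
  have he : ∀ v, e (Submodule.Quotient.mk v) = f v := by
    intro v
    simp [e, LinearMap.quotKerEquivOfSurjective, LinearMap.quotKerEquivRange_apply_mk]
  refine ⟨((LinearMap.ker f).liftQ X' hle) ∘ₗ (e.symm : M₃ →ₗ[R] _), ?_⟩
  apply LinearMap.ext
  intro m
  obtain ⟨v, rfl⟩ := hf m
  have hsymm : e.symm (f v) = Submodule.Quotient.mk v := by
    rw [← he v, LinearEquiv.symm_apply_apply]
  simp only [LinearMap.comp_apply, LinearMap.id_apply, LinearEquiv.coe_coe, hsymm,
    Submodule.liftQ_apply, hpX']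
end

section
/- Let R be a commutative ring and M an R-module. The canonical map Hom_R(M,R) ⊗_R S → Hom_S(M ⊗_R S, S), sending w ⊗ s to s times the S-linear extension of w, is surjective for every commutative R-algebra S if and only if M is a finitely generated projective R-module. -/
open TensorProduct

universe u

variable (R : Type u) [CommRing R] (M : Type u) [AddCommGroup M] [Module R M]

/-- The `R`-linear map sending `w ∈ Hom_R(M, R)` to its `S`-linear extension
`M ⊗_R S → S`, `m ⊗ s ↦ w(m)·s`. -/
noncomputable def dualExtension (S : Type u) [CommRing S] [Algebra R S] :
    (M →ₗ[R] R) →ₗ[R] ((S ⊗[R] M) →ₗ[S] S) where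
  toFun w := LinearMap.liftBaseChange S ((Algebra.linearMap R S) ∘ₗ w)
  map_add' w₁ w₂ := by
    apply LinearMap.ext
    intro x
    induction x using TensorProduct.induction_on with
    | zero => simp
    | tmul s m => simp [mul_add]
    | add x y hx hy =>
        simp only [map_add, LinearMap.add_apply] at hx hy ⊢
        rw [hx, hy]
  map_smul' r w := by
    apply LinearMap.ext
    intro x
    induction x using TensorProduct.induction_on with
    | zero => simp
    | tmul s m => simp [Algebra.smul_def, mul_left_comm, mul_comm]
    | add x y hx hy =>
        simp only [map_add, LinearMap.smul_apply, RingHom.id_apply] at hx hy ⊢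
        rw [hx, hy]

lemma finite_projective_of_dual_basis {ι : Type*} [Fintype ι]
    (x : ι → M) (w : ι → (M →ₗ[R] R)) (h : ∀ m, ∑ i, w i m • x i = m) :
    Module.Finite R M ∧ Module.Projective R M := by
  classical
  let g : M →ₗ[R] (ι → R) := LinearMap.pi (fun i => w i)
  let f : (ι → R) →ₗ[R] M := ∑ i, (LinearMap.proj i : (ι → R) →ₗ[R] R).smulRight (x i)
  have hfg : f ∘ₗ g = LinearMap.id := by
    ext m
    simp [f, g, LinearMap.sum_apply, h m]
  constructor
  · exact Module.Finite.of_surjective f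
      (fun m => ⟨g m, by simpa using congrArg (· m) hfg⟩)
  · exact Module.Projective.of_split g f hfg

lemma surj_of_dual_basis {ι : Type*} [Fintype ι]
    (x : ι → M) (w : ι → (M →ₗ[R] R)) (h : ∀ m, ∑ i, w i m • x i = m)
    (S : Type u) [CommRing S] [Algebra R S] :
    Function.Surjective
      (LinearMap.liftBaseChange S (dualExtension R M S) :
        S ⊗[R] (M →ₗ[R] R) →ₗ[S] ((S ⊗[R] M) →ₗ[S] S)) := by
  intro F
  refine ⟨∑ i, F (1 ⊗ₜ x i) ⊗ₜ w i, ?_⟩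
  apply LinearMap.ext
  intro z
  induction z using TensorProduct.induction_on with
  | zero => simp
  | add a b ha hb => simp only [map_add, ha, hb]
  | tmul s m =>
    have key : ∀ i : ι, (algebraMap R S (w i m)) * F (1 ⊗ₜ x i)
        = F (1 ⊗ₜ (w i m • x i)) := by
      intro i
      rw [← Algebra.smul_def, TensorProduct.tmul_smul]
      exact (map_smul (F.restrictScalars R) _ _).symm
    calc (LinearMap.liftBaseChange S (dualExtension R M S))
          (∑ i, F (1 ⊗ₜ x i) ⊗ₜ w i) (s ⊗ₜ m)
        = ∑ i, F (1 ⊗ₜ x i) * (s * algebraMap R S (w i m)) := by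
          simp [LinearMap.liftBaseChange_tmul, dualExtension, Algebra.smul_def,
            LinearMap.sum_apply]
      _ = s * ∑ i, algebraMap R S (w i m) * F (1 ⊗ₜ x i) := by
          rw [Finset.mul_sum]; exact Finset.sum_congr rfl (fun i _ => by ring)
      _ = s * F (1 ⊗ₜ m) := by
          simp only [key]
          rw [← map_sum, ← TensorProduct.tmul_sum, h m]
      _ = F (s ⊗ₜ m) := by
          rw [← smul_eq_mul, ← map_smul]
          congr 1
          rw [TensorProduct.smul_tmul', smul_eq_mul, mul_one]

lemma exists_dual_basis_of_surj
    (H : ∀ (S : Type u) [CommRing S] [Algebra R S],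
        Function.Surjective
          (LinearMap.liftBaseChange S (dualExtension R M S) :
            S ⊗[R] (M →ₗ[R] R) →ₗ[S] ((S ⊗[R] M) →ₗ[S] S))) :
    ∃ (ι : Type u) (_ : Fintype ι) (x : ι → M) (w : ι → (M →ₗ[R] R)),
      ∀ m, ∑ i, w i m • x i = m := by
  classical
  letI : Module Rᵐᵒᵖ M := Module.compHom M ((RingHom.id R).fromOpposite mul_comm)
  letI : IsCentralScalar R M := ⟨fun r m => rfl⟩
  set S := TrivSqZeroExt R M with hS
  obtain ⟨t, ht⟩ := H S (LinearMap.liftBaseChange S (TrivSqZeroExt.inrHom R M))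
  obtain ⟨sf, rfl⟩ := TensorProduct.exists_finset t
  refine ⟨{ p // p ∈ sf }, inferInstance,
    fun p => TrivSqZeroExt.snd (p.1.1), fun p => p.1.2, fun m => ?_⟩
  have h1 := congrArg (fun (F : S ⊗[R] M →ₗ[S] S) => F ((1 : S) ⊗ₜ m)) ht
  simp only [map_sum, LinearMap.sum_apply, LinearMap.liftBaseChange_tmul, one_smul, TrivSqZeroExt.inrHom_apply] at h1
  have h2 : ∑ p ∈ sf, (p.2 m) • p.1 = TrivSqZeroExt.inrHom R M m := by
    rw [← h1]
    refine Finset.sum_congr rfl (fun p _ => ?_)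
    rw [LinearMap.smul_apply]
    simp only [dualExtension, LinearMap.coe_mk, AddHom.coe_mk,
      LinearMap.liftBaseChange_tmul, LinearMap.coe_comp, Function.comp_apply,
      Algebra.linearMap_apply, one_smul]
    rw [smul_eq_mul, mul_comm, ← Algebra.smul_def]
  have h3 := congrArg (TrivSqZeroExt.sndHom R M) h2
  simpa [Finset.sum_attach sf (fun p => (p.2 m) • TrivSqZeroExt.snd p.1)] using h3

/-- The canonical map `Hom_R(M,R) ⊗_R S → Hom_S(M ⊗_R S, S)`, `w ⊗ s ↦ s · (extension
of w)`, is surjective for every commutative `R`-algebra `S` iff `M` is a finitely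
generated projective `R`-module. -/
theorem surjective_dual_baseChange_iff_finite_projective :
    (∀ (S : Type u) [CommRing S] [Algebra R S],
        Function.Surjective
          (LinearMap.liftBaseChange S (dualExtension R M S) :
            S ⊗[R] (M →ₗ[R] R) →ₗ[S] ((S ⊗[R] M) →ₗ[S] S)))
      ↔ (Module.Finite R M ∧ Module.Projective R M) := by
  constructor
  · intro H
    obtain ⟨ι, _, x, w, h⟩ := exists_dual_basis_of_surj R M H
    exact finite_projective_of_dual_basis R M x w h
  · rintro ⟨hf, hp⟩ S _ _
    obtain ⟨n, f, g, surj, inj, hfg⟩ := Module.Finite.exists_comp_eq_id_of_projective R M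
    refine surj_of_dual_basis R M (fun i => f (Pi.single i 1))
      (fun i => (LinearMap.proj i) ∘ₗ g) (fun m => ?_) S
    classical
    have hgm : ∑ i, g m i • (Pi.single i 1 : Fin n → R) = g m := by
      simp only [← Pi.single_smul, smul_eq_mul, mul_one, Finset.univ_sum_single]
    calc ∑ i, ((LinearMap.proj i ∘ₗ g) m) • f (Pi.single i 1)
        = f (∑ i, g m i • (Pi.single i 1 : Fin n → R)) := by rw [map_sum]; simp
      _ = f (g m) := by rw [hgm]
      _ = m := LinearMap.congr_fun hfg m
end

section
/- Let R be a commutative ring, M and N R-modules, and φ: N → Hom_R(M,R) an R-linear map. For each commutative R-algebra S consider the induced map N ⊗_R S → Hom_S(M ⊗_R S, S) sending n ⊗ s to s times the S-linear extension of φ(n). These maps are surjective for every commutative R-algebra S if and only if M is a finitely generated projective R-module and φ is surjective. -/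
open TensorProduct

universe u

variable (R : Type u) [CommRing R] (M : Type u) [AddCommGroup M] [Module R M]

/-- Given `φ : N → Hom_R(M,R)`, the induced maps
`N ⊗_R S → Hom_S(M ⊗_R S, S)`, `n ⊗ s ↦ s · (extension of φ(n))`, are surjective for
every commutative `R`-algebra `S` iff `M` is finitely generated projective and `φ` is
surjective. -/
theorem surjective_toDual_baseChange_iff_finite_projective_and_surjective
    (N : Type u) [AddCommGroup N] [Module R N] (φ : N →ₗ[R] (M →ₗ[R] R)) :
    (∀ (S : Type u) [CommRing S] [Algebra R S],
        Function.Surjective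
          (LinearMap.liftBaseChange S ((dualExtension R M S) ∘ₗ φ) :
            S ⊗[R] N →ₗ[S] ((S ⊗[R] M) →ₗ[S] S)))
      ↔ (Module.Finite R M ∧ Module.Projective R M ∧ Function.Surjective φ) := by
  constructor
  · intro h
    -- surjectivity of φ, from S = R
    have hφ : Function.Surjective φ := by
      intro w
      obtain ⟨t, ht⟩ := h R (w ∘ₗ (TensorProduct.lid R M).toLinearMap)
      obtain ⟨F, rfl⟩ := TensorProduct.exists_finset t
      refine ⟨∑ p ∈ F, p.1 • p.2, ?_⟩
      apply LinearMap.ext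
      intro m
      have := congrArg (fun f : R ⊗[R] M →ₗ[R] R => f ((1:R) ⊗ₜ[R] m)) ht
      simp only [map_sum, LinearMap.sum_apply, LinearMap.liftBaseChange_tmul,
        LinearMap.smul_apply, LinearMap.comp_apply, LinearEquiv.coe_coe,
        TensorProduct.lid_tmul, one_smul] at this ⊢
      rw [← this]
      apply Finset.sum_congr rfl
      intro p _
      simp [dualExtension, LinearMap.liftBaseChange_tmul, smul_eq_mul, mul_comm]
    -- finite projective, from S = TrivSqZeroExt R M
    letI : Module Rᵐᵒᵖ M := Module.compHom M ((RingHom.id R).fromOpposite mul_comm)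
    haveI : IsCentralScalar R M := ⟨fun r m => rfl⟩
    haveI : SMulCommClass R Rᵐᵒᵖ M := ⟨fun r s m => smul_comm r s.unop m⟩
    haveI : SMulCommClass Rᵐᵒᵖ R M := ⟨fun s r m => smul_comm s.unop r m⟩
    obtain ⟨t, ht⟩ := h (TrivSqZeroExt R M)
      (LinearMap.liftBaseChange (TrivSqZeroExt R M) (TrivSqZeroExt.inrHom R M))
    obtain ⟨F, rfl⟩ := TensorProduct.exists_finset t
    have key : ∀ m : M, ∑ p ∈ F, (φ p.2) m • (TrivSqZeroExt.snd p.1 : M) = m := by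
      intro m
      have := congrArg
        (fun f : TrivSqZeroExt R M ⊗[R] M →ₗ[TrivSqZeroExt R M] TrivSqZeroExt R M =>
          TrivSqZeroExt.snd (f ((1 : TrivSqZeroExt R M) ⊗ₜ[R] m))) ht
      simp only [map_sum, LinearMap.sum_apply, LinearMap.liftBaseChange_tmul,
        LinearMap.smul_apply, LinearMap.comp_apply, LinearMap.liftBaseChange_one_tmul,
        TrivSqZeroExt.inrHom_apply, one_smul, TrivSqZeroExt.snd_inr] at this
      conv_rhs => rw [← this]
      rw [TrivSqZeroExt.snd_sum]
      apply Finset.sum_congr rfl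
      intro p _
      have h1 : (dualExtension R M (TrivSqZeroExt R M)) (φ p.2) ((1 : TrivSqZeroExt R M) ⊗ₜ[R] m)
          = algebraMap R (TrivSqZeroExt R M) ((φ p.2) m) := by
        simp [dualExtension, LinearMap.liftBaseChange_one_tmul]
      rw [h1, smul_eq_mul, TrivSqZeroExt.algebraMap_eq_inl, TrivSqZeroExt.snd_mul]
      simp only [TrivSqZeroExt.snd_inl, TrivSqZeroExt.fst_inl, smul_zero, zero_add]
      rw [op_smul_eq_smul]
    -- build the splitting through F → R
    classical
    let G : (F → R) →ₗ[R] M :=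
      Fintype.linearCombination R (fun p : F => TrivSqZeroExt.snd (p : TrivSqZeroExt R M × N).1)
    let i : M →ₗ[R] (F → R) := LinearMap.pi (fun p : F => φ (p : TrivSqZeroExt R M × N).2)
    have hGi : ∀ m : M, G (i m) = m := by
      intro m
      show (∑ p : F, φ (p : TrivSqZeroExt R M × N).2 m • TrivSqZeroExt.snd (p : TrivSqZeroExt R M × N).1) = m
      rw [Finset.sum_coe_sort F (fun p => φ p.2 m • TrivSqZeroExt.snd p.1)]
      exact key m
    refine ⟨Module.Finite.of_surjective G (fun m => ⟨i m, hGi m⟩),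
      Module.Projective.of_split i G (LinearMap.ext hGi), hφ⟩
  · rintro ⟨hfin, hproj, hsurj⟩ S _ _ g
    obtain ⟨n, f, g', -, -, hfg⟩ := Module.Finite.exists_comp_eq_id_of_projective R M
    choose ψ hψ using hsurj
    classical
    refine ⟨∑ j : Fin n, g ((1 : S) ⊗ₜ[R] f (Pi.single j 1)) ⊗ₜ[R]
      ψ ((LinearMap.proj j : (Fin n → R) →ₗ[R] R) ∘ₗ g'), ?_⟩
    have hdual : ∀ m : M, ∑ j : Fin n, (g' m j) • f (Pi.single j 1) = m := by
      intro m
      have : ∑ j : Fin n, (g' m j) • f (Pi.single j 1) = f (∑ j : Fin n, g' m j • (Pi.single j 1 : Fin n → R)) := by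
        rw [map_sum]
        exact Finset.sum_congr rfl fun j _ => (map_smul f _ _).symm
      rw [this]
      have h2 : (∑ j : Fin n, g' m j • (Pi.single j 1 : Fin n → R)) = g' m := by
        funext k
        simp [Pi.single_apply, Finset.sum_ite_eq', mul_comm]
      rw [h2, ← LinearMap.comp_apply, hfg, LinearMap.id_apply]
    have hone : ∀ m : M,
        (LinearMap.liftBaseChange S ((dualExtension R M S) ∘ₗ φ))
          (∑ j : Fin n, g ((1 : S) ⊗ₜ[R] f (Pi.single j 1)) ⊗ₜ[R]
            ψ ((LinearMap.proj j : (Fin n → R) →ₗ[R] R) ∘ₗ g')) ((1 : S) ⊗ₜ[R] m)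
        = g ((1 : S) ⊗ₜ[R] m) := by
      intro m
      rw [map_sum, LinearMap.sum_apply]
      have hterm : ∀ j : Fin n,
          ((LinearMap.liftBaseChange S ((dualExtension R M S) ∘ₗ φ))
            (g ((1 : S) ⊗ₜ[R] f (Pi.single j 1)) ⊗ₜ[R]
              ψ ((LinearMap.proj j : (Fin n → R) →ₗ[R] R) ∘ₗ g'))) ((1 : S) ⊗ₜ[R] m)
          = g ((1 : S) ⊗ₜ[R] ((g' m j) • f (Pi.single j 1))) := by
        intro j
        rw [LinearMap.liftBaseChange_tmul, LinearMap.smul_apply, LinearMap.comp_apply, hψ]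
        have h1 : (dualExtension R M S) ((LinearMap.proj j : (Fin n → R) →ₗ[R] R) ∘ₗ g')
            ((1 : S) ⊗ₜ[R] m) = algebraMap R S (g' m j) := by
          simp [dualExtension, LinearMap.liftBaseChange_one_tmul]
        rw [h1, smul_eq_mul, mul_comm, ← Algebra.smul_def, ← LinearMap.map_smul_of_tower, TensorProduct.tmul_smul]
      rw [Finset.sum_congr rfl fun j _ => hterm j, ← map_sum, ← TensorProduct.tmul_sum,
        hdual m]
    apply LinearMap.ext
    intro x
    induction x using TensorProduct.induction_on with
    | zero => simp
    | tmul s m =>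
        have : s ⊗ₜ[R] m = s • ((1 : S) ⊗ₜ[R] m) := by
          rw [TensorProduct.smul_tmul', smul_eq_mul, mul_one]
        rw [this, map_smul, map_smul, hone m]
    | add x y hx hy => rw [map_add, map_add, hx, hy]
end

section
/- Let R be a commutative ring and u: V₂ → V₁ an R-linear map between R-modules. Then u is surjective if and only if for every commutative R-algebra S the induced map Hom_S(V₁ ⊗_R S, S) → Hom_S(V₂ ⊗_R S, S), given by w ↦ w ∘ (u ⊗ id_S), is injective. -/
open TensorProduct

universe u
set_option synthInstance.maxHeartbeats 1000000
set_option maxHeartbeats 2000000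

/-- An `R`-linear map `u : V₂ → V₁` is surjective iff for every commutative `R`-algebra
`S` the induced map `Hom_S(V₁ ⊗_R S, S) → Hom_S(V₂ ⊗_R S, S)`, `w ↦ w ∘ (u ⊗ id_S)`,
is injective. -/
theorem surjective_iff_dual_baseChange_injective
    (R : Type u) [CommRing R] (V₁ V₂ : Type u) [AddCommGroup V₁] [Module R V₁]
    [AddCommGroup V₂] [Module R V₂] (u : V₂ →ₗ[R] V₁) :
    Function.Surjective u ↔
      ∀ (S : Type u) [CommRing S] [Algebra R S],
        Function.Injective
          (fun w : (S ⊗[R] V₁) →ₗ[S] S => w ∘ₗ u.baseChange S) := by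
  constructor
  · intro hu S _ _ w₁ w₂ h
    have hbc : Function.Surjective (u.baseChange S) :=
      LinearMap.lTensor_surjective S hu
    apply LinearMap.ext
    intro x
    obtain ⟨y, rfl⟩ := hbc x
    exact congrFun (congrArg (fun w : (S ⊗[R] V₂) →ₗ[S] S => ⇑w) h) y
  · intro h
    by_contra hns
    rw [Function.Surjective] at hns
    push_neg at hns
    obtain ⟨v, hv⟩ := hns
    have hvM : (LinearMap.range u).mkQ v ≠ 0 := by
      intro h0
      rw [Submodule.mkQ_apply, Submodule.Quotient.mk_eq_zero] at h0
      obtain ⟨y, hy⟩ := h0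
      exact hv y hy
    letI : Module Rᵐᵒᵖ (V₁ ⧸ LinearMap.range u) :=
      Module.compHom _ ((RingHom.id R).fromOpposite mul_comm)
    haveI : IsCentralScalar R (V₁ ⧸ LinearMap.range u) := ⟨fun _ _ => rfl⟩
    let f : V₁ →ₗ[R] TrivSqZeroExt R (V₁ ⧸ LinearMap.range u) :=
      (TrivSqZeroExt.inrHom R (V₁ ⧸ LinearMap.range u)) ∘ₗ (LinearMap.range u).mkQ
    let w : (TrivSqZeroExt R (V₁ ⧸ LinearMap.range u) ⊗[R] V₁) →ₗ[TrivSqZeroExt R (V₁ ⧸ LinearMap.range u)] TrivSqZeroExt R (V₁ ⧸ LinearMap.range u) := LinearMap.liftBaseChange (TrivSqZeroExt R (V₁ ⧸ LinearMap.range u)) f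
    have hw : w ∘ₗ u.baseChange (TrivSqZeroExt R (V₁ ⧸ LinearMap.range u)) =
        (0 : (TrivSqZeroExt R (V₁ ⧸ LinearMap.range u) ⊗[R] V₁)
          →ₗ[TrivSqZeroExt R (V₁ ⧸ LinearMap.range u)]
          TrivSqZeroExt R (V₁ ⧸ LinearMap.range u)) ∘ₗ
          u.baseChange (TrivSqZeroExt R (V₁ ⧸ LinearMap.range u)) := by
      apply (LinearMap.liftBaseChangeEquiv
        (TrivSqZeroExt R (V₁ ⧸ LinearMap.range u))).symm.injective
      apply LinearMap.ext
      intro y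
      simp only [LinearMap.liftBaseChangeEquiv_symm_apply, LinearMap.comp_apply,
        LinearMap.baseChange_tmul, LinearMap.liftBaseChange_tmul, one_smul,
        LinearMap.zero_apply, w, f, TrivSqZeroExt.inrHom_apply, Submodule.mkQ_apply]
      rw [show (Submodule.Quotient.mk (u y) : V₁ ⧸ LinearMap.range u) = 0 by simp,
        TrivSqZeroExt.inr_zero]
    have := h (TrivSqZeroExt R (V₁ ⧸ LinearMap.range u)) hw
    have h1 : w (1 ⊗ₜ v) = 0 := by rw [this]; rfl
    apply hvM
    have : w (1 ⊗ₜ v) = TrivSqZeroExt.inr ((LinearMap.range u).mkQ v) := by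
      simp [w, f]
    rw [this] at h1
    rw [← TrivSqZeroExt.inr_zero R] at h1
    exact TrivSqZeroExt.inr_injective h1
end

section
/- Let R be a commutative ring and M an R-module. Then M is finitely presented if and only if for every directed system {N_i} of R-modules the canonical map colim_i Hom_R(M, N_i) → Hom_R(M, colim_i N_i) is bijective. -/
universe u

private theorem aux_fwd (R M : Type u) [CommRing R] [AddCommGroup M] [Module R M]
    [Module.FinitePresentation R M]
    (ι : Type u) [Preorder ι] [IsDirected ι (· ≤ ·)] [Nonempty ι]
    (N : ι → Type u) [∀ i, AddCommGroup (N i)] [∀ i, Module R (N i)]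
    (t : ∀ i j, i ≤ j → N i →ₗ[R] N j)
    (L : Type u) [AddCommGroup L] [Module R L] (g : ∀ i, N i →ₗ[R] L)
    (hcomp : ∀ (i j k : ι) (hij : i ≤ j) (hjk : j ≤ k) (x : N i),
        t j k hjk (t i j hij x) = t i k (le_trans hij hjk) x)
    (hgcomp : ∀ (i j : ι) (hij : i ≤ j) (x : N i), g j (t i j hij x) = g i x)
    (hsurj : ∀ x : L, ∃ i y, g i y = x)
    (hker : ∀ (i : ι) (y : N i), g i y = 0 → ∃ (j : ι) (hij : i ≤ j), t i j hij y = 0) :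
    ((∀ φ : M →ₗ[R] L, ∃ (i : ι) (ψ : M →ₗ[R] N i), (g i) ∘ₗ ψ = φ) ∧
      (∀ (i : ι) (ψ : M →ₗ[R] N i), (g i) ∘ₗ ψ = 0 →
        ∃ (j : ι) (hij : i ≤ j), (t i j hij) ∘ₗ ψ = 0)) := by
  classical
  obtain ⟨n, p, hp⟩ := Module.Finite.exists_fin' R M
  have hKfg : (LinearMap.ker p).FG := Module.FinitePresentation.fg_ker p hp
  obtain ⟨T, hT⟩ := hKfg
  obtain ⟨s, hs⟩ := (Module.Finite.fg_top (R:=R) (M:=M))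
  constructor
  · intro φ
    choose idx y hy using fun k : Fin n => hsurj (φ (p (Pi.single k 1)))
    obtain ⟨i0, hi0⟩ := Finset.exists_le (Finset.image idx Finset.univ)
    have hle : ∀ k, idx k ≤ i0 := fun k => hi0 _ (Finset.mem_image_of_mem _ (Finset.mem_univ k))
    let u : (Fin n → R) →ₗ[R] N i0 :=
      (Pi.basisFun R (Fin n)).constr ℕ fun k => t (idx k) i0 (hle k) (y k)
    have key : (g i0) ∘ₗ u = φ ∘ₗ p := by
      apply (Pi.basisFun R (Fin n)).ext
      intro k
      simp only [LinearMap.comp_apply, u]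
      rw [Module.Basis.constr_basis, hgcomp, hy, Pi.basisFun_apply]
    choose jdx hjdx hjz using fun r : T =>
      hker i0 (u r.1) (by
        have hr : (r : Fin n → R) ∈ LinearMap.ker p := hT ▸ Submodule.subset_span r.2
        have := congrArg (fun f : (Fin n → R) →ₗ[R] L => f r.1) key
        simp only [LinearMap.comp_apply] at this
        rw [this, LinearMap.mem_ker.mp hr, map_zero])
    obtain ⟨j, hj⟩ := Finset.exists_le (insert i0 (Finset.image jdx Finset.univ))
    have hij : i0 ≤ j := hj _ (Finset.mem_insert_self _ _)
    have hjr : ∀ r : T, jdx r ≤ j := fun r =>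
      hj _ (Finset.mem_insert_of_mem (Finset.mem_image_of_mem _ (Finset.mem_univ r)))
    set v : (Fin n → R) →ₗ[R] N j := (t i0 j hij) ∘ₗ u with hv
    have hkerv : LinearMap.ker p ≤ LinearMap.ker v := by
      rw [← hT, Submodule.span_le]
      intro r hr
      have : t i0 j hij (u r) = t (jdx ⟨r, hr⟩) j (hjr ⟨r, hr⟩) (t i0 (jdx ⟨r, hr⟩) (hjdx ⟨r, hr⟩) (u r)) := by
        rw [hcomp]
      simp only [SetLike.mem_coe, LinearMap.mem_ker, hv, LinearMap.comp_apply]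
      rw [this, hjz ⟨r, hr⟩, map_zero]
    refine ⟨j, ((LinearMap.ker p).liftQ v hkerv) ∘ₗ (p.quotKerEquivOfSurjective hp).symm.toLinearMap, ?_⟩
    ext x
    obtain ⟨z, rfl⟩ := hp x
    have hz : (p.quotKerEquivOfSurjective hp).symm (p z) = Submodule.Quotient.mk z := by
      rw [LinearEquiv.symm_apply_eq]
      rfl
    simp only [LinearMap.comp_apply, LinearEquiv.coe_toLinearMap, hz, Submodule.liftQ_apply, hv]
    rw [hgcomp]
    have := congrArg (fun f : (Fin n → R) →ₗ[R] L => f z) key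
    simpa using this
  · intro i ψ hψ
    choose jdx hjdx hjz using fun x : s =>
      hker i (ψ x.1) (by
        have := congrArg (fun f : M →ₗ[R] L => f x.1) hψ
        simpa using this)
    obtain ⟨j, hj⟩ := Finset.exists_le (insert i (Finset.image jdx Finset.univ))
    have hij : i ≤ j := hj _ (Finset.mem_insert_self _ _)
    have hjr : ∀ x : s, jdx x ≤ j := fun x =>
      hj _ (Finset.mem_insert_of_mem (Finset.mem_image_of_mem _ (Finset.mem_univ x)))
    refine ⟨j, hij, ?_⟩
    apply LinearMap.ext_on hs
    intro x hx
    have : t i j hij (ψ x) = t (jdx ⟨x, hx⟩) j (hjr ⟨x, hx⟩) (t i (jdx ⟨x, hx⟩) (hjdx ⟨x, hx⟩) (ψ x)) := by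
      rw [hcomp]
    simp only [LinearMap.comp_apply, LinearMap.zero_apply]
    rw [this, hjz ⟨x, hx⟩, map_zero]


set_option maxHeartbeats 1000000 in
private theorem aux_rev (R M : Type u) [CommRing R] [AddCommGroup M] [Module R M]
    (H : ∀ (ι : Type u) [Preorder ι] [IsDirected ι (· ≤ ·)] [Nonempty ι]
        (N : ι → Type u) [∀ i, AddCommGroup (N i)] [∀ i, Module R (N i)]
        (t : ∀ i j, i ≤ j → N i →ₗ[R] N j)
        (L : Type u) [AddCommGroup L] [Module R L] (g : ∀ i, N i →ₗ[R] L),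
        (∀ (i j k : ι) (hij : i ≤ j) (hjk : j ≤ k) (x : N i),
            t j k hjk (t i j hij x) = t i k (le_trans hij hjk) x) →
        (∀ (i j : ι) (hij : i ≤ j) (x : N i), g j (t i j hij x) = g i x) →
        (∀ x : L, ∃ i y, g i y = x) →
        (∀ (i : ι) (y : N i), g i y = 0 → ∃ (j : ι) (hij : i ≤ j), t i j hij y = 0) →
        ((∀ φ : M →ₗ[R] L, ∃ (i : ι) (ψ : M →ₗ[R] N i), (g i) ∘ₗ ψ = φ) ∧
          (∀ (i : ι) (ψ : M →ₗ[R] N i), (g i) ∘ₗ ψ = 0 →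
            ∃ (j : ι) (hij : i ≤ j), (t i j hij) ∘ₗ ψ = 0))) :
    Module.FinitePresentation R M := by
  classical
  -- Step A: M is finite
  have hfin : Module.Finite R M := by
    have h1 := (H (Finset M) (fun s => Submodule.span R (s : Set M))
        (fun s s' h => Submodule.inclusion (Submodule.span_mono (Finset.coe_subset.mpr h)))
        M (fun s => (Submodule.span R (s : Set M)).subtype)
        (fun i j k hij hjk x => rfl)
        (fun i j hij x => rfl)
        (fun x => ⟨{x}, ⟨x, Submodule.subset_span (by simp)⟩, rfl⟩)
        (fun i y hy => ⟨i, le_refl i, by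
          have : y = 0 := Subtype.ext hy
          simp [this]⟩)).1
    obtain ⟨s, ψ, hψ⟩ := h1 LinearMap.id
    refine ⟨⟨s, le_antisymm le_top ?_⟩⟩
    intro x _
    have : (Submodule.span R (s : Set M)).subtype (ψ x) = x := by
      have := congrArg (fun f : M →ₗ[R] M => f x) hψ
      simpa using this
    rw [← this]
    exact (ψ x).2
  -- Step B
  obtain ⟨n, p, hp⟩ := Module.Finite.exists_fin' R M
  haveI : Module.FinitePresentation R (Fin n → R) :=
    Module.finitePresentation_of_projective R (Fin n → R)
  let ι := {P : Submodule R (Fin n → R) // P.FG ∧ P ≤ LinearMap.ker p}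
  haveI : IsDirected ι (· ≤ ·) := ⟨fun a b =>
    ⟨⟨a.1 ⊔ b.1, a.2.1.sup b.2.1, sup_le a.2.2 b.2.2⟩,
      Subtype.coe_le_coe.mp le_sup_left, Subtype.coe_le_coe.mp le_sup_right⟩⟩
  haveI : Nonempty ι := ⟨⟨⊥, Submodule.fg_bot, bot_le⟩⟩
  have h2 := (H ι (fun P => (Fin n → R) ⧸ P.1)
      (fun P Q h => Submodule.mapQ P.1 Q.1 LinearMap.id (by rw [Submodule.comap_id]; exact h))
      M (fun P => P.1.liftQ p P.2.2)
      (fun i j k hij hjk x => by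
        obtain ⟨z, rfl⟩ := Submodule.Quotient.mk_surjective _ x
        simp [Submodule.mapQ_apply])
      (fun i j hij x => by
        obtain ⟨z, rfl⟩ := Submodule.Quotient.mk_surjective _ x
        simp [Submodule.mapQ_apply, Submodule.liftQ_apply])
      (fun x => by
        obtain ⟨z, rfl⟩ := hp x
        exact ⟨⟨⊥, Submodule.fg_bot, bot_le⟩, Submodule.Quotient.mk z, rfl⟩)
      (fun i y hy => by
        obtain ⟨z, rfl⟩ := Submodule.Quotient.mk_surjective _ y
        have hz : z ∈ LinearMap.ker p := by simpa using hy
        refine ⟨⟨i.1 ⊔ Submodule.span R {z}, i.2.1.sup (Submodule.fg_span_singleton z),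
          sup_le i.2.2 ((Submodule.span_singleton_le_iff_mem _ _).mpr hz)⟩, Subtype.coe_le_coe.mp le_sup_left, ?_⟩
        simp only [Submodule.mapQ_apply, LinearMap.id_coe, id_eq]
        rw [Submodule.Quotient.mk_eq_zero]
        exact Submodule.mem_sup_right (Submodule.mem_span_singleton_self z))).1
  obtain ⟨P, ψ, hψ⟩ := h2 LinearMap.id
  -- g P = P.1.liftQ p P.2.2 : F ⧸ P.1 →ₗ M has section ψ
  set q : (Fin n → R) ⧸ P.1 →ₗ[R] M := P.1.liftQ p P.2.2 with hq
  have hretr : ∀ x : M, q (ψ x) = x := fun x => by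
    have := congrArg (fun f : M →ₗ[R] M => f x) hψ
    simpa using this
  haveI : Module.FinitePresentation R ((Fin n → R) ⧸ P.1) :=
    Module.finitePresentation_of_surjective P.1.mkQ (Submodule.Quotient.mk_surjective _)
      (by rw [Submodule.ker_mkQ]; exact P.2.1)
  have hqsurj : Function.Surjective q := fun x => ⟨ψ x, hretr x⟩
  have hker : LinearMap.ker q = LinearMap.range (LinearMap.id - ψ ∘ₗ q) := by
    ext x
    constructor
    · intro hx
      exact ⟨x, by simp [LinearMap.mem_ker.mp hx]⟩
    · rintro ⟨z, rfl⟩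
      simp [hretr]
  have hfgker : (LinearMap.ker q).FG := by
    rw [hker, LinearMap.range_eq_map]
    haveI hfi : Module.Finite R ((Fin n → R) ⧸ P.1) := inferInstance
    have hfg : (⊤ : Submodule R ((Fin n → R) ⧸ P.1)).FG := hfi.fg_top
    exact Submodule.FG.map _ hfg
  exact Module.finitePresentation_of_surjective q hqsurj hfgker

/-- `M` is a finitely presented `R`-module iff for every directed system `{N i}` of
`R`-modules (with directed colimit `L`, presented by a compatible cocone `g` which is
surjective and has the colimit kernel property), the canonical map
`colim_i Hom_R(M, N i) → Hom_R(M, colim_i N i)` is bijective; bijectivity is expressed by: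
every map `M → L` factors through some `N i`, and any map `M → N i` vanishing in `L`
already vanishes in some `N j`, `j ≥ i`. -/
theorem finitePresentation_iff_hom_commutes_with_directed_colimits
    (R M : Type u) [CommRing R] [AddCommGroup M] [Module R M] :
    Module.FinitePresentation R M ↔
      ∀ (ι : Type u) [Preorder ι] [IsDirected ι (· ≤ ·)] [Nonempty ι]
        (N : ι → Type u) [∀ i, AddCommGroup (N i)] [∀ i, Module R (N i)]
        (t : ∀ i j, i ≤ j → N i →ₗ[R] N j)
        (L : Type u) [AddCommGroup L] [Module R L] (g : ∀ i, N i →ₗ[R] L),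
        (∀ (i j k : ι) (hij : i ≤ j) (hjk : j ≤ k) (x : N i),
            t j k hjk (t i j hij x) = t i k (le_trans hij hjk) x) →
        (∀ (i j : ι) (hij : i ≤ j) (x : N i), g j (t i j hij x) = g i x) →
        (∀ x : L, ∃ i y, g i y = x) →
        (∀ (i : ι) (y : N i), g i y = 0 → ∃ (j : ι) (hij : i ≤ j), t i j hij y = 0) →
        ((∀ φ : M →ₗ[R] L, ∃ (i : ι) (ψ : M →ₗ[R] N i), (g i) ∘ₗ ψ = φ) ∧
          (∀ (i : ι) (ψ : M →ₗ[R] N i), (g i) ∘ₗ ψ = 0 →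
            ∃ (j : ι) (hij : i ≤ j), (t i j hij) ∘ₗ ψ = 0)) := by
  constructor
  · intro h
    haveI := h
    intro ι _ _ _ N _ _ t L _ _ g hc hg hs hk
    exact aux_fwd R M ι N t L g hc hg hs hk
  · exact aux_rev R M
end
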